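/- For every Δ with Δ_min ≤ Δ ≤ Δ_max, R_i(Δ) = min over pmfs P_S on 𝒜_k and families of reals (Δ_A, A ∈ 𝒜_k) with Δ_A ≥ Δ_min,A for all A and Σ_{A ∈ 𝒜_k} P_S(A) Δ_A ≤ Δ, of Σ_{A ∈ 𝒜_k} P_S(A) R_A(Δ_A). Here Δ_min = min_{A ∈ 𝒜_k} Δ_min,A and Δ_max = min_{y ∈ 𝒴} Σ_x P(x) d(x,y). -/

import Mathlib

noncomputable section

/-- A probability mass function on a finite type. -/
def IsPMF {T : Type*} [Fintype T] (p : T → ℝ) : Prop :=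
  (∀ t, 0 ≤ p t) ∧ ∑ t, p t = 1

/-- Mutual information of a joint pmf `Q` on a product of two finite types;
terms with `Q p = 0` vanish since `0 * log _ = 0`. -/
def mutInfo {α β : Type*} [Fintype α] [Fintype β] (Q : α × β → ℝ) : ℝ :=
  ∑ p : α × β, Q p * Real.log (Q p / ((∑ b, Q (p.1, b)) * (∑ a, Q (a, p.2))))

/-- The family `𝒜_k` of `k`-element subsets of `{1, …, m}`. -/
abbrev SetsK (m k : ℕ) := {A : Finset (Fin m) // A.card = k}

variable {m : ℕ} {X : Fin m → Type} [∀ i, Fintype (X i)] [∀ i, DecidableEq (X i)]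
  [∀ i, Nonempty (X i)] {Y : Type} [Fintype Y] [Nonempty Y]

/-- Restriction of `x ∈ 𝒳_ℳ` to the coordinates in `A`. -/
def restr (A : Finset (Fin m)) (x : ∀ i, X i) : ∀ i : A, X i.1 := fun i => x i.1

/-- The marginal pmf `P_{X_A}` of the coordinates in `A`. -/
def margA (P : (∀ i, X i) → ℝ) (A : Finset (Fin m)) (xA : ∀ i : A, X i.1) : ℝ :=
  ∑ x : ∀ i, X i, if restr A x = xA then P x else 0

/-- The modified distortion `d_A(x_A, y)`. -/
def dAk (P : (∀ i, X i) → ℝ) (d : (∀ i, X i) → Y → ℝ) (A : Finset (Fin m))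
    (xA : ∀ i : A, X i.1) (y : Y) : ℝ :=
  (∑ x : ∀ i, X i, if restr A x = xA then P x * d x y else 0) / margA P A xA

/-- The fixed-set rate distortion function `R_A(Δ)`: the minimum of `I(X_A ∧ Y)` over
joint pmfs of `(X_A, Y)` with first marginal `P_{X_A}` and `E[d_A(X_A,Y)] ≤ Δ`. -/
def RAk (P : (∀ i, X i) → ℝ) (d : (∀ i, X i) → Y → ℝ) (A : Finset (Fin m)) (Δ : ℝ) : ℝ :=
  sInf {r | ∃ Q : (∀ i : A, X i.1) × Y → ℝ, IsPMF Q ∧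
    (∀ xA, ∑ y, Q (xA, y) = margA P A xA) ∧
    (∑ p : (∀ i : A, X i.1) × Y, Q p * dAk P d A p.1 p.2) ≤ Δ ∧ mutInfo Q = r}

/-- `Δ_min,A = Σ_{x_A} P_{X_A}(x_A) min_y d_A(x_A, y)`. -/
def DminA (P : (∀ i, X i) → ℝ) (d : (∀ i, X i) → Y → ℝ) (A : Finset (Fin m)) : ℝ :=
  ∑ xA : ∀ i : A, X i.1,
    margA P A xA * Finset.univ.inf' Finset.univ_nonempty (fun y => dAk P d A xA y)

/-- A reconstruction kernel `W(·|A, x_A)`: a pmf on `𝒴` for each `A ∈ 𝒜_k` and each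
value `x_A` of the sampled coordinates. -/
def IsKernelW (k : ℕ) (W : ∀ A : SetsK m k, (∀ i : A.1, X i.1) → Y → ℝ) : Prop :=
  ∀ A xA, IsPMF (W A xA)

/-- The conditional mutual information `I(X_S ∧ Y | S) = Σ_A P_S(A) I(X_A ∧ Y | S = A)`
for a `k`-IRS `(P_S, W)`. -/
def condMI (k : ℕ) (P : (∀ i, X i) → ℝ) (PS : SetsK m k → ℝ)
    (W : ∀ A : SetsK m k, (∀ i : A.1, X i.1) → Y → ℝ) : ℝ :=
  ∑ A : SetsK m k, PS A *
    mutInfo (fun p : (∀ i : A.1, X i.1) × Y => margA P A.1 p.1 * W A p.1 p.2)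

/-- The expected distortion `E[d(X,Y)]` for a `k`-IRS `(P_S, W)`. -/
def expDistIRS (k : ℕ) (P : (∀ i, X i) → ℝ) (d : (∀ i, X i) → Y → ℝ)
    (PS : SetsK m k → ℝ) (W : ∀ A : SetsK m k, (∀ i : A.1, X i.1) → Y → ℝ) : ℝ :=
  ∑ A : SetsK m k, ∑ x : ∀ i, X i, ∑ y, PS A * P x * W A (restr A.1 x) y * d x y

/-- The SRDf `R_i(Δ)` for a `k`-IRS. -/
def Ri (k : ℕ) (P : (∀ i, X i) → ℝ) (d : (∀ i, X i) → Y → ℝ) (Δ : ℝ) : ℝ :=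
  sInf {r | ∃ (PS : SetsK m k → ℝ) (W : ∀ A : SetsK m k, (∀ i : A.1, X i.1) → Y → ℝ),
    IsPMF PS ∧ IsKernelW k W ∧ expDistIRS k P d PS W ≤ Δ ∧ condMI k P PS W = r}

set_option linter.unusedSectionVars false

section helpers

variable (P : (∀ i, X i) → ℝ) (d : (∀ i, X i) → Y → ℝ)

lemma exists_restr_eq (A : Finset (Fin m)) (xA : ∀ i : A, X i.1) :
    ∃ x : ∀ i, X i, restr A x = xA := by
  refine ⟨fun i => if h : i ∈ A then xA ⟨i, h⟩ else Classical.arbitrary _, ?_⟩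
  funext i
  simp [restr, i.2]

lemma margA_nonneg (hP : ∀ x, 0 ≤ P x) (A : Finset (Fin m)) (xA : ∀ i : A, X i.1) :
    0 ≤ margA P A xA := by
  refine Finset.sum_nonneg fun x _ => ?_
  split <;> simp [hP]

lemma margA_pos (hfull : ∀ x, 0 < P x) (A : Finset (Fin m)) (xA : ∀ i : A, X i.1) :
    0 < margA P A xA := by
  obtain ⟨x, hx⟩ := exists_restr_eq (X := X) A xA
  have h1 : (if restr A x = xA then P x else 0) ≤ margA P A xA := by
    refine Finset.single_le_sum (f := fun x => if restr A x = xA then P x else 0)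
      (fun y _ => ?_) (Finset.mem_univ x)
    split <;> simp [(hfull _).le]
  rw [if_pos hx] at h1
  exact lt_of_lt_of_le (hfull x) h1

lemma fiber_sum (A : Finset (Fin m)) (f : (∀ i, X i) → ℝ) (g : (∀ i : A, X i.1) → ℝ) :
    ∑ xA : ∀ i : A, X i.1, g xA * ∑ x, (if restr A x = xA then f x else 0)
      = ∑ x, g (restr A x) * f x := by
  simp_rw [Finset.mul_sum]
  rw [Finset.sum_comm]
  refine Finset.sum_congr rfl fun x _ => ?_
  simp [mul_ite, Finset.sum_ite_eq]

lemma sum_margA (A : Finset (Fin m)) :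
    ∑ xA : ∀ i : A, X i.1, margA P A xA = ∑ x, P x := by
  have := fiber_sum (X := X) A P (fun _ => (1:ℝ))
  simpa [margA] using this

lemma dAk_nonneg (hP : ∀ x, 0 ≤ P x) (hd : ∀ x y, 0 ≤ d x y) (A : Finset (Fin m))
    (xA : ∀ i : A, X i.1) (y : Y) : 0 ≤ dAk P d A xA y := by
  refine div_nonneg (Finset.sum_nonneg fun x _ => ?_) (margA_nonneg P hP A xA)
  split <;> [exact mul_nonneg (hP _) (hd _ _); rfl]

lemma margA_mul_dAk (hfull : ∀ x, 0 < P x) (A : Finset (Fin m)) (xA : ∀ i : A, X i.1)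
    (y : Y) : margA P A xA * dAk P d A xA y
      = ∑ x, (if restr A x = xA then P x * d x y else 0) := by
  rw [dAk, mul_comm, div_mul_cancel₀ _ (margA_pos P hfull A xA).ne']

/-- Per-set identity for the expected distortion. -/
lemma perA_dist (hfull : ∀ x, 0 < P x) (A : Finset (Fin m))
    (W : (∀ i : A, X i.1) → Y → ℝ) :
    ∑ x, ∑ y, P x * W (restr A x) y * d x y
      = ∑ p : (∀ i : A, X i.1) × Y, (margA P A p.1 * W p.1 p.2) * dAk P d A p.1 p.2 := by
  calc ∑ x, ∑ y, P x * W (restr A x) y * d x y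
      = ∑ y, ∑ x, W (restr A x) y * (P x * d x y) := by
        rw [Finset.sum_comm]
        exact Finset.sum_congr rfl fun y _ => Finset.sum_congr rfl fun x _ => by ring
    _ = ∑ y, ∑ xA : ∀ i : A, X i.1,
          W xA y * ∑ x, (if restr A x = xA then P x * d x y else 0) := by
        exact Finset.sum_congr rfl fun y _ =>
          (fiber_sum A (fun x => P x * d x y) (fun xA => W xA y)).symm
    _ = ∑ y, ∑ xA : ∀ i : A, X i.1, (margA P A xA * W xA y) * dAk P d A xA y := by
        refine Finset.sum_congr rfl fun y _ => Finset.sum_congr rfl fun xA _ => ?_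
        rw [← margA_mul_dAk P d hfull A xA y]; ring
    _ = ∑ p : (∀ i : A, X i.1) × Y, (margA P A p.1 * W p.1 p.2) * dAk P d A p.1 p.2 := by
        rw [Fintype.sum_prod_type, Finset.sum_comm]

lemma mutInfo_nonneg {α β : Type*} [Fintype α] [Fintype β] (Q : α × β → ℝ)
    (hQ : IsPMF Q) : 0 ≤ mutInfo Q := by
  classical
  set m1 : α → ℝ := fun a => ∑ b, Q (a, b) with hm1
  set m2 : β → ℝ := fun b => ∑ a, Q (a, b) with hm2
  have hm1n : ∀ a, 0 ≤ m1 a := fun a => Finset.sum_nonneg fun b _ => hQ.1 _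
  have hm2n : ∀ b, 0 ≤ m2 b := fun b => Finset.sum_nonneg fun a _ => hQ.1 _
  have key : ∀ p : α × β, Q p - m1 p.1 * m2 p.2
      ≤ Q p * Real.log (Q p / (m1 p.1 * m2 p.2)) := by
    intro p
    rcases eq_or_lt_of_le (hQ.1 p) with h | h
    · rw [← h]
      simpa using mul_nonneg (hm1n p.1) (hm2n p.2)
    · have h1 : Q p ≤ m1 p.1 := by
        refine Finset.single_le_sum (f := fun b => Q (p.1, b)) (fun b _ => hQ.1 _)
          (Finset.mem_univ p.2)
      have h2 : Q p ≤ m2 p.2 := by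
        refine Finset.single_le_sum (f := fun a => Q (a, p.2)) (fun a _ => hQ.1 _)
          (Finset.mem_univ p.1)
      have hm1p : 0 < m1 p.1 := lt_of_lt_of_le h h1
      have hm2p : 0 < m2 p.2 := lt_of_lt_of_le h h2
      have hlog : Real.log ((m1 p.1 * m2 p.2) / Q p) ≤ (m1 p.1 * m2 p.2) / Q p - 1 :=
        Real.log_le_sub_one_of_pos (div_pos (mul_pos hm1p hm2p) h)
      have e1 : Real.log ((m1 p.1 * m2 p.2) / Q p)
          = - Real.log (Q p / (m1 p.1 * m2 p.2)) := by
        rw [← Real.log_inv, inv_div]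
      rw [e1] at hlog
      have e2 : Q p * ((m1 p.1 * m2 p.2) / Q p) = m1 p.1 * m2 p.2 :=
        mul_div_cancel₀ _ h.ne'
      nlinarith [mul_le_mul_of_nonneg_left hlog h.le]
  calc (0:ℝ) = ∑ p : α × β, (Q p - m1 p.1 * m2 p.2) := by
        have hs1 : ∑ a, m1 a = 1 := by
          rw [hm1, ← Fintype.sum_prod_type]; exact hQ.2
        have hs2 : ∑ b, m2 b = 1 := by
          rw [hm2, Finset.sum_comm, ← Fintype.sum_prod_type]; exact hQ.2
        rw [Finset.sum_sub_distrib, hQ.2]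
        rw [show ∑ p : α × β, m1 p.1 * m2 p.2 = (∑ a, m1 a) * (∑ b, m2 b) by
          rw [Fintype.sum_prod_type, Finset.sum_mul_sum]]
        rw [hs1, hs2]; ring
    _ ≤ mutInfo Q := Finset.sum_le_sum fun p _ => key p

lemma DminA_le_dist (hP : ∀ x, 0 ≤ P x) (hd : ∀ x y, 0 ≤ d x y) (A : Finset (Fin m))
    (Q : (∀ i : A, X i.1) × Y → ℝ) (hQn : ∀ p, 0 ≤ Q p)
    (hmarg : ∀ xA, ∑ y, Q (xA, y) = margA P A xA) :
    DminA P d A ≤ ∑ p : (∀ i : A, X i.1) × Y, Q p * dAk P d A p.1 p.2 := by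
  rw [DminA, Fintype.sum_prod_type]
  refine Finset.sum_le_sum fun xA _ => ?_
  calc margA P A xA * Finset.univ.inf' Finset.univ_nonempty (fun y => dAk P d A xA y)
      = ∑ y, Q (xA, y) * Finset.univ.inf' Finset.univ_nonempty (fun y => dAk P d A xA y) := by
        rw [← Finset.sum_mul, hmarg]
    _ ≤ ∑ y, Q (xA, y) * dAk P d A xA y :=
        Finset.sum_le_sum fun y _ => mul_le_mul_of_nonneg_left
          (Finset.inf'_le _ (Finset.mem_univ y)) (hQn _)

/-- The minimal-distortion deterministic joint pmf for a set `A`. -/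
lemma exists_Qmin (hP : IsPMF P) (hfull : ∀ x, 0 < P x) (A : Finset (Fin m)) :
    ∃ Q : (∀ i : A, X i.1) × Y → ℝ, IsPMF Q ∧
      (∀ xA, ∑ y, Q (xA, y) = margA P A xA) ∧
      (∑ p : (∀ i : A, X i.1) × Y, Q p * dAk P d A p.1 p.2) = DminA P d A := by
  classical
  have hy : ∀ xA : ∀ i : A, X i.1, ∃ y0 : Y,
      Finset.univ.inf' Finset.univ_nonempty (fun y => dAk P d A xA y) = dAk P d A xA y0 := by
    intro xA
    obtain ⟨y0, _, hy0⟩ := Finset.exists_mem_eq_inf' (Finset.univ_nonempty)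
      (fun y => dAk P d A xA y)
    exact ⟨y0, hy0⟩
  choose y0 hy0 using hy
  refine ⟨fun p => if p.2 = y0 p.1 then margA P A p.1 else 0, ⟨fun p => ?_, ?_⟩, fun xA => ?_, ?_⟩
  · dsimp only
    split <;> simp [margA_nonneg P hP.1]
  · rw [Fintype.sum_prod_type]
    simp only [Finset.sum_ite_eq', Finset.mem_univ, if_true]
    rw [sum_margA, hP.2]
  · simp [Finset.sum_ite_eq']
  · rw [Fintype.sum_prod_type, DminA]
    refine Finset.sum_congr rfl fun xA _ => ?_
    simp only [ite_mul, zero_mul, Finset.sum_ite_eq', Finset.mem_univ, if_true]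
    rw [hy0]

end helpers

section mainhelpers

variable (P : (∀ i, X i) → ℝ) (d : (∀ i, X i) → Y → ℝ)

lemma jointQ_pmf (hP : IsPMF P) (A : Finset (Fin m)) (W : (∀ i : A, X i.1) → Y → ℝ)
    (hW : ∀ xA, IsPMF (W xA)) :
    IsPMF (fun p : (∀ i : A, X i.1) × Y => margA P A p.1 * W p.1 p.2) := by
  constructor
  · exact fun p => mul_nonneg (margA_nonneg P hP.1 A p.1) ((hW p.1).1 p.2)
  · rw [Fintype.sum_prod_type]
    have : ∀ xA : ∀ i : A, X i.1, ∑ y, margA P A xA * W xA y = margA P A xA := by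
      intro xA; rw [← Finset.mul_sum, (hW xA).2, mul_one]
    rw [Finset.sum_congr rfl fun xA _ => this xA, sum_margA, hP.2]

lemma jointQ_marg (A : Finset (Fin m)) (W : (∀ i : A, X i.1) → Y → ℝ)
    (hW : ∀ xA, IsPMF (W xA)) (xA : ∀ i : A, X i.1) :
    ∑ y, margA P A xA * W xA y = margA P A xA := by
  rw [← Finset.mul_sum, (hW xA).2, mul_one]

lemma RAk_nonneg (A : Finset (Fin m)) (Δ' : ℝ) : 0 ≤ RAk P d A Δ' := by
  refine Real.sInf_nonneg fun r hr => ?_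
  obtain ⟨Q, hQ, -, -, hM⟩ := hr
  rw [← hM]
  exact mutInfo_nonneg Q hQ

lemma RAk_bddBelow (A : Finset (Fin m)) (Δ' : ℝ) :
    BddBelow {r | ∃ Q : (∀ i : A, X i.1) × Y → ℝ, IsPMF Q ∧
      (∀ xA, ∑ y, Q (xA, y) = margA P A xA) ∧
      (∑ p : (∀ i : A, X i.1) × Y, Q p * dAk P d A p.1 p.2) ≤ Δ' ∧ mutInfo Q = r} := by
  refine ⟨0, fun r hr => ?_⟩
  obtain ⟨Q, hQ, -, -, hM⟩ := hr
  rw [← hM]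
  exact mutInfo_nonneg Q hQ

lemma RAk_set_nonempty (hP : IsPMF P) (hfull : ∀ x, 0 < P x) (A : Finset (Fin m))
    {Δ' : ℝ} (hΔ' : DminA P d A ≤ Δ') :
    Set.Nonempty {r | ∃ Q : (∀ i : A, X i.1) × Y → ℝ, IsPMF Q ∧
      (∀ xA, ∑ y, Q (xA, y) = margA P A xA) ∧
      (∑ p : (∀ i : A, X i.1) × Y, Q p * dAk P d A p.1 p.2) ≤ Δ' ∧ mutInfo Q = r} := by
  obtain ⟨Q, hQ, hmarg, hdist⟩ := exists_Qmin P d hP hfull A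
  exact ⟨mutInfo Q, Q, hQ, hmarg, hdist.le.trans hΔ', rfl⟩

lemma expDist_eq (hfull : ∀ x, 0 < P x) (k : ℕ) (PS : SetsK m k → ℝ)
    (W : ∀ A : SetsK m k, (∀ i : A.1, X i.1) → Y → ℝ) :
    expDistIRS k P d PS W = ∑ A : SetsK m k, PS A *
      ∑ p : (∀ i : A.1, X i.1) × Y,
        (margA P A.1 p.1 * W A p.1 p.2) * dAk P d A.1 p.1 p.2 := by
  unfold expDistIRS
  refine Finset.sum_congr rfl fun A _ => ?_
  rw [← perA_dist P d hfull A.1 (W A), Finset.mul_sum]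
  refine Finset.sum_congr rfl fun x _ => ?_
  rw [Finset.mul_sum]
  exact Finset.sum_congr rfl fun y _ => by ring

lemma build_W (hfull : ∀ x, 0 < P x) (k : ℕ) (PS : SetsK m k → ℝ)
    (Q : ∀ A : SetsK m k, ((∀ i : A.1, X i.1) × Y) → ℝ)
    (hQ : ∀ A, IsPMF (Q A))
    (hmarg : ∀ (A : SetsK m k) xA, ∑ y, Q A (xA, y) = margA P A.1 xA) :
    ∃ W : ∀ A : SetsK m k, (∀ i : A.1, X i.1) → Y → ℝ, IsKernelW k W ∧
      condMI k P PS W = ∑ A, PS A * mutInfo (Q A) ∧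
      expDistIRS k P d PS W
        = ∑ A : SetsK m k, PS A * ∑ p, Q A p * dAk P d A.1 p.1 p.2 := by
  refine ⟨fun A xA y => Q A (xA, y) / margA P A.1 xA, ?_, ?_, ?_⟩
  case _ =>
    intro A xA
    constructor
    · exact fun y => div_nonneg ((hQ A).1 _) (margA_pos P hfull A.1 xA).le
    · rw [← Finset.sum_div, hmarg, div_self (margA_pos P hfull A.1 xA).ne']
  all_goals
    have hpt : ∀ (A : SetsK m k) (p : (∀ i : A.1, X i.1) × Y),
        margA P A.1 p.1 * (Q A (p.1, p.2) / margA P A.1 p.1) = Q A p := by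
      intro A p
      rw [mul_comm, div_mul_cancel₀ _ (margA_pos P hfull A.1 p.1).ne']
  case _ =>
    unfold condMI
    refine Finset.sum_congr rfl fun A _ => ?_
    congr 1
    exact congrArg mutInfo (funext fun p => hpt A p)
  case _ =>
    rw [expDist_eq P d hfull k PS]
    refine Finset.sum_congr rfl fun A _ => ?_
    congr 1
    exact Finset.sum_congr rfl fun p _ => by rw [hpt A p]

end mainhelpers

/-- `R_i(Δ)` equals the minimum of `Σ_A P_S(A) R_A(Δ_A)` over pmfs `P_S`
on `𝒜_k` and distortion allocations `(Δ_A)` with `Δ_A ≥ Δ_min,A` and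
`Σ_A P_S(A) Δ_A ≤ Δ`. -/
theorem stmt8 (k : ℕ) (hk1 : 1 ≤ k) (hkm : k ≤ m)
    (P : (∀ i, X i) → ℝ) (hP : IsPMF P) (hfull : ∀ x, 0 < P x)
    (d : (∀ i, X i) → Y → ℝ) (hd : ∀ x y, 0 ≤ d x y) (Δ : ℝ)
    (hmin : sInf (Set.range fun A : SetsK m k => DminA P d A.1) ≤ Δ)
    (hmax : Δ ≤ Finset.univ.inf' Finset.univ_nonempty (fun y => ∑ x, P x * d x y)) :
    Ri k P d Δ =
      sInf {r | ∃ (PS : SetsK m k → ℝ) (Δf : SetsK m k → ℝ), IsPMF PS ∧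
        (∀ A, DminA P d A.1 ≤ Δf A) ∧ (∑ A, PS A * Δf A) ≤ Δ ∧
        (∑ A, PS A * RAk P d A.1 (Δf A)) = r} := by
  classical
  -- SetsK m k is nonempty
  have hne : Nonempty (SetsK m k) := by
    obtain ⟨B, -, hB⟩ := Finset.exists_subset_card_eq (s := (Finset.univ : Finset (Fin m))) (n := k)
      (by simpa using hkm)
    exact ⟨⟨B, hB⟩⟩
  -- a set A0 achieving the minimal DminA, which is ≤ Δ
  obtain ⟨A0, hA0⟩ : ∃ A0 : SetsK m k, DminA P d A0.1 ≤ Δ := by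
    have h1 : sInf (Set.range fun A : SetsK m k => DminA P d A.1)
        ∈ Set.range fun A : SetsK m k => DminA P d A.1 :=
      Set.Nonempty.csInf_mem (Set.range_nonempty _) (Set.finite_range _)
    obtain ⟨A0, hA0⟩ := h1
    exact ⟨A0, hA0.le.trans hmin⟩
  set S1 : Set ℝ := {r | ∃ (PS : SetsK m k → ℝ)
      (W : ∀ A : SetsK m k, (∀ i : A.1, X i.1) → Y → ℝ),
    IsPMF PS ∧ IsKernelW k W ∧ expDistIRS k P d PS W ≤ Δ ∧ condMI k P PS W = r} with hS1
  set S2 : Set ℝ := {r | ∃ (PS : SetsK m k → ℝ) (Δf : SetsK m k → ℝ), IsPMF PS ∧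
        (∀ A, DminA P d A.1 ≤ Δf A) ∧ (∑ A, PS A * Δf A) ≤ Δ ∧
        (∑ A, PS A * RAk P d A.1 (Δf A)) = r} with hS2
  -- the deterministic point mass at A0
  set PS0 : SetsK m k → ℝ := fun A => if A = A0 then 1 else 0 with hPS0
  have hPS0pmf : IsPMF PS0 := by
    constructor
    · intro A; dsimp only [PS0]; split <;> norm_num
    · simp [PS0, Finset.sum_ite_eq']
  have hPS0sum : ∀ c : SetsK m k → ℝ, ∑ A, PS0 A * c A = c A0 := by
    intro c
    simp [PS0, ite_mul, Finset.sum_ite_eq']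
  -- S1 is nonempty
  have hS1ne : S1.Nonempty := by
    have hQex : ∀ A : SetsK m k, ∃ Q : (∀ i : A.1, X i.1) × Y → ℝ, IsPMF Q ∧
        (∀ xA, ∑ y, Q (xA, y) = margA P A.1 xA) ∧
        (∑ p : (∀ i : A.1, X i.1) × Y, Q p * dAk P d A.1 p.1 p.2) = DminA P d A.1 :=
      fun A => exists_Qmin P d hP hfull A.1
    choose Q hQpmf hQmarg hQdist using hQex
    obtain ⟨W, hWker, hWcond, hWdist⟩ := build_W P d hfull k PS0 Q hQpmf hQmarg
    refine ⟨condMI k P PS0 W, PS0, W, hPS0pmf, hWker, ?_, rfl⟩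
    rw [hWdist]
    calc ∑ A : SetsK m k, PS0 A * ∑ p, Q A p * dAk P d A.1 p.1 p.2
        = ∑ A : SetsK m k, PS0 A * DminA P d A.1 :=
          Finset.sum_congr rfl fun A _ => by rw [hQdist]
      _ = DminA P d A0.1 := hPS0sum _
      _ ≤ Δ := hA0
  -- S1 is bounded below by 0
  have hS1bdd : BddBelow S1 := by
    refine ⟨0, fun r hr => ?_⟩
    obtain ⟨PS, W, hPS, hW, -, rfl⟩ := hr
    refine Finset.sum_nonneg fun A _ => mul_nonneg (hPS.1 A) ?_
    exact mutInfo_nonneg _ (jointQ_pmf P hP A.1 (W A) (hW A))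
  -- S2 is nonempty
  have hS2ne : S2.Nonempty := by
    refine ⟨_, PS0, fun A => if A = A0 then Δ else DminA P d A.1, hPS0pmf, ?_, ?_, rfl⟩
    · intro A
      dsimp only
      split
      · rename_i h; rw [h]; exact hA0
      · exact le_rfl
    · rw [hPS0sum]
      simp
  -- S2 is bounded below by 0
  have hS2bdd : BddBelow S2 := by
    refine ⟨0, fun r hr => ?_⟩
    obtain ⟨PS, Δf, hPS, -, -, rfl⟩ := hr
    exact Finset.sum_nonneg fun A _ => mul_nonneg (hPS.1 A) (RAk_nonneg P d A.1 (Δf A))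
  rw [Ri]
  refine le_antisymm ?_ ?_
  · -- sInf S1 ≤ sInf S2, via ε-argument
    refine le_csInf hS2ne ?_
    rintro r ⟨PS, Δf, hPS, hDf, hsum, rfl⟩
    refine le_of_forall_pos_le_add fun ε hε => ?_
    have hQex : ∀ A : SetsK m k, ∃ Q : (∀ i : A.1, X i.1) × Y → ℝ, IsPMF Q ∧
        (∀ xA, ∑ y, Q (xA, y) = margA P A.1 xA) ∧
        (∑ p : (∀ i : A.1, X i.1) × Y, Q p * dAk P d A.1 p.1 p.2) ≤ Δf A ∧
        mutInfo Q < RAk P d A.1 (Δf A) + ε := by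
      intro A
      have hlt : sInf {r | ∃ Q : (∀ i : A.1, X i.1) × Y → ℝ, IsPMF Q ∧
          (∀ xA, ∑ y, Q (xA, y) = margA P A.1 xA) ∧
          (∑ p : (∀ i : A.1, X i.1) × Y, Q p * dAk P d A.1 p.1 p.2) ≤ Δf A ∧
          mutInfo Q = r} < RAk P d A.1 (Δf A) + ε := by
        rw [RAk] at *
        exact lt_add_of_pos_right _ hε
      obtain ⟨rA, hrA, hlt'⟩ := exists_lt_of_csInf_lt
        (RAk_set_nonempty P d hP hfull A.1 (hDf A)) hlt
      obtain ⟨Q, hQ, hm, hdi, hMI⟩ := hrA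
      exact ⟨Q, hQ, hm, hdi, hMI ▸ hlt'⟩
    choose Q hQpmf hQmarg hQdist hQMI using hQex
    obtain ⟨W, hWker, hWcond, hWdist⟩ := build_W P d hfull k PS Q hQpmf hQmarg
    have hmem : condMI k P PS W ∈ S1 := by
      refine ⟨PS, W, hPS, hWker, ?_, rfl⟩
      rw [hWdist]
      calc ∑ A : SetsK m k, PS A * ∑ p, Q A p * dAk P d A.1 p.1 p.2
          ≤ ∑ A, PS A * Δf A :=
            Finset.sum_le_sum fun A _ => mul_le_mul_of_nonneg_left (hQdist A) (hPS.1 A)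
        _ ≤ Δ := hsum
    calc sInf S1 ≤ condMI k P PS W := csInf_le hS1bdd hmem
      _ = ∑ A, PS A * mutInfo (Q A) := hWcond
      _ ≤ ∑ A, PS A * (RAk P d A.1 (Δf A) + ε) :=
          Finset.sum_le_sum fun A _ => mul_le_mul_of_nonneg_left (hQMI A).le (hPS.1 A)
      _ = (∑ A, PS A * RAk P d A.1 (Δf A)) + ε := by
          rw [Finset.sum_congr rfl fun (A : SetsK m k) _ =>
            mul_add (PS A) (RAk P d A.1 (Δf A)) ε, Finset.sum_add_distrib,
            ← Finset.sum_mul, hPS.2, one_mul]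
  · -- sInf S2 ≤ sInf S1
    refine le_csInf hS1ne ?_
    rintro r ⟨PS, W, hPS, hW, hdist, rfl⟩
    set Δf : SetsK m k → ℝ := fun A =>
      ∑ p : (∀ i : A.1, X i.1) × Y, (margA P A.1 p.1 * W A p.1 p.2) * dAk P d A.1 p.1 p.2
      with hΔf
    have hDf : ∀ A : SetsK m k, DminA P d A.1 ≤ Δf A := by
      intro A
      exact DminA_le_dist P d hP.1 hd A.1 _
        (fun p => mul_nonneg (margA_nonneg P hP.1 A.1 p.1) ((hW A p.1).1 p.2))
        (jointQ_marg P A.1 (W A) (hW A))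
    have hsum : ∑ A, PS A * Δf A ≤ Δ := by
      rw [← expDist_eq P d hfull k PS W]
      exact hdist
    have hmem : (∑ A, PS A * RAk P d A.1 (Δf A)) ∈ S2 := ⟨PS, Δf, hPS, hDf, hsum, rfl⟩
    calc sInf S2 ≤ ∑ A, PS A * RAk P d A.1 (Δf A) := csInf_le hS2bdd hmem
      _ ≤ condMI k P PS W := by
          refine Finset.sum_le_sum fun A _ => mul_le_mul_of_nonneg_left ?_ (hPS.1 A)
          refine csInf_le (RAk_bddBelow P d A.1 (Δf A)) ?_
          exact ⟨fun p => margA P A.1 p.1 * W A p.1 p.2,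
            jointQ_pmf P hP A.1 (W A) (hW A), jointQ_marg P A.1 (W A) (hW A),
            le_refl _, rfl⟩
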